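/- Let $V$ be a real inner product space, $Z\in V$, and let $w, w_1, w_2$ be linear isometries of $V$ onto itself with $w_1(Z)=Z$ and $w_2(Z)=Z$. Let $\gamma_1,\ldots,\gamma_k \in V$ ($k\ge1$) be nonzero and pairwise orthogonal, and let $\beta\in V$ be nonzero with $\langle\beta,\gamma_j\rangle=0$ for $j=2,\ldots,k$. Assume $\langle\beta,\beta\rangle = 2\langle\gamma_1,\gamma_1\rangle$, $\langle\gamma_1,w(Z)\rangle>0$, and $0\le\langle\beta,w(Z)\rangle\le\langle\gamma_1,w(Z)\rangle$. Let $r_\gamma$ denote the orthogonal reflection $r_\gamma(v)=v-\frac{2\langle \gamma,v\rangle}{\langle\gamma,\gamma\rangle}\gamma$. Then $\langle Z,\ (w^{-1}\circ r_\beta\circ r_{\gamma_2}\circ\cdots\circ r_{\gamma_k}\circ w)(Z)\rangle - \langle Z,\ (w_1\circ w^{-1}\circ r_{\gamma_1}\circ r_{\gamma_2}\circ\cdots\circ r_{\gamma_k}\circ w\circ w_2)(Z)\rangle = \frac{2\langle\gamma_1,w(Z)\rangle^2}{\langle\gamma_1,\gamma_1\rangle} - \frac{2\langle\beta,w(Z)\rangle^2}{\langle\beta,\beta\rangle}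 > 0$; in particular $w^{-1}\circ r_\beta\circ r_{\gamma_2}\circ\cdots\circ r_{\gamma_k}\circ w \ne w_ 1\circ w^{-1}\circ r_{\gamma_1}\circ\cdots\circ r_{\gamma_k}\circ w\circ w_2$. (Statement (2.4) in the proof of Lemma 2.4.) -/

import Mathlib

open scoped RealInnerProductSpace

noncomputable section

variable {V : Type*} [NormedAddCommGroup V] [InnerProductSpace ℝ V]

/-- The orthogonal reflection in the hyperplane orthogonal to `γ`:
`r_γ(v) = v - (2⟨γ,v⟩/⟨γ,γ⟩) γ`. -/
def reflect (γ : V) (v : V) : V := v - (2 * ⟪γ, v⟫ / ⟪γ, γ⟫) • γ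

/-- The composition `r_{l₁} ∘ r_{l₂} ∘ ⋯ ∘ r_{lₙ}` of the reflections in the
entries of a list `l = [l₁, …, lₙ]` (the identity for the empty list). -/
def compReflect (l : List V) : V → V := l.foldr (fun γ f => reflect γ ∘ f) id

lemma inner_reflect (δ a v : V) :
    ⟪δ, reflect a v⟫ = ⟪δ, v⟫ - (2 * ⟪a, v⟫ / ⟪a, a⟫) * ⟪δ, a⟫ := by
  simp [reflect, inner_sub_right, real_inner_smul_right]

lemma compReflect_cons (a : V) (t : List V) (u : V) :
    compReflect (a :: t) u = reflect a (compReflect t u) := rfl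

lemma inner_compReflect_orth (l : List V) (u δ : V) (h : ∀ x ∈ l, ⟪δ, x⟫ = 0) :
    ⟪δ, compReflect l u⟫ = ⟪δ, u⟫ := by
  induction l with
  | nil => rfl
  | cons a t ih =>
      rw [compReflect_cons, inner_reflect, h a List.mem_cons_self,
        ih (fun x hx => h x (List.mem_cons_of_mem a hx))]
      ring

/-- Statement (2.4) in the proof of Lemma 2.4: with isometries `w, w₁, w₂` fixing
`Z` (for `w₁, w₂`), nonzero pairwise orthogonal `γ₁, …, γₖ`, and a nonzero `β`
orthogonal to `γ₂, …, γₖ` with `⟨β,β⟩ = 2⟨γ₁,γ₁⟩`, `⟨γ₁,wZ⟩ > 0` and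
`0 ≤ ⟨β,wZ⟩ ≤ ⟨γ₁,wZ⟩`, one has
`⟨Z, w⁻¹r_β r_{γ₂}⋯r_{γₖ}w Z⟩ - ⟨Z, w₁w⁻¹r_{γ₁}⋯r_{γₖ}ww₂ Z⟩
  = 2⟨γ₁,wZ⟩²/⟨γ₁,γ₁⟩ - 2⟨β,wZ⟩²/⟨β,β⟩ > 0`;
in particular the two maps are distinct. -/
theorem stmt_16 (Z : V) (w w1 w2 : V ≃ₗᵢ[ℝ] V) (hw1 : w1 Z = Z) (hw2 : w2 Z = Z)
    (k : ℕ) (hk : 0 < k) (γ : Fin k → V) (β : V)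
    (hne : ∀ i, γ i ≠ 0) (hβne : β ≠ 0)
    (horth : ∀ i j, i ≠ j → ⟪γ i, γ j⟫ = 0)
    (hβorth : ∀ i : Fin k, 0 < (i : ℕ) → ⟪β, γ i⟫ = 0)
    (hββ : ⟪β, β⟫ = 2 * ⟪γ ⟨0, hk⟩, γ ⟨0, hk⟩⟫)
    (hγ1 : 0 < ⟪γ ⟨0, hk⟩, w Z⟫)
    (hβ1 : 0 ≤ ⟪β, w Z⟫) (hβ2 : ⟪β, w Z⟫ ≤ ⟪γ ⟨0, hk⟩, w Z⟫) :
    (⟪Z, (⇑w.symm ∘ reflect β ∘ compReflect (List.ofFn γ).tail ∘ ⇑w) Z⟫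
        - ⟪Z, (⇑w1 ∘ ⇑w.symm ∘ compReflect (List.ofFn γ) ∘ ⇑w ∘ ⇑w2) Z⟫
      = 2 * ⟪γ ⟨0, hk⟩, w Z⟫ ^ 2 / ⟪γ ⟨0, hk⟩, γ ⟨0, hk⟩⟫
        - 2 * ⟪β, w Z⟫ ^ 2 / ⟪β, β⟫) ∧
    (0 < 2 * ⟪γ ⟨0, hk⟩, w Z⟫ ^ 2 / ⟪γ ⟨0, hk⟩, γ ⟨0, hk⟩⟫
        - 2 * ⟪β, w Z⟫ ^ 2 / ⟪β, β⟫) ∧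
    (⇑w.symm ∘ reflect β ∘ compReflect (List.ofFn γ).tail ∘ ⇑w
      ≠ ⇑w1 ∘ ⇑w.symm ∘ compReflect (List.ofFn γ) ∘ ⇑w ∘ ⇑w2) := by
  obtain ⟨m, rfl⟩ : ∃ m, k = m + 1 := ⟨k - 1, (Nat.succ_pred_eq_of_pos hk).symm⟩
  set u := w Z with hu
  have h0 : (⟨0, hk⟩ : Fin (m + 1)) = 0 := rfl
  rw [h0] at hββ hγ1 hβ2 ⊢
  have hofn : List.ofFn γ = γ 0 :: List.ofFn (fun i : Fin m => γ i.succ) :=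
    List.ofFn_succ
  have htail : (List.ofFn γ).tail = List.ofFn (fun i : Fin m => γ i.succ) := by
    rw [hofn]; rfl
  set v := compReflect (List.ofFn γ).tail u with hv
  -- orthogonality facts
  have hβv : ⟪β, v⟫ = ⟪β, u⟫ := by
    rw [hv, htail]
    refine inner_compReflect_orth _ _ _ ?_
    intro x hx
    obtain ⟨i, rfl⟩ := List.mem_ofFn.1 hx
    exact hβorth i.succ (by simp)
  have hγv : ⟪γ 0, v⟫ = ⟪γ 0, u⟫ := by
    rw [hv, htail]
    refine inner_compReflect_orth _ _ _ ?_
    intro x hx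
    obtain ⟨i, rfl⟩ := List.mem_ofFn.1 hx
    exact horth 0 i.succ (Fin.succ_ne_zero i).symm
  have hγγ : (0:ℝ) < ⟪γ 0, γ 0⟫ := by
    rw [real_inner_self_eq_norm_sq]; exact pow_pos (norm_pos_iff.2 (hne 0)) 2
  have hβnorm : (0:ℝ) < ⟪β, β⟫ := by
    rw [real_inner_self_eq_norm_sq]; exact pow_pos (norm_pos_iff.2 hβne) 2
  -- rewrite the two inner products
  have key1 : ⟪Z, (⇑w.symm ∘ reflect β ∘ compReflect (List.ofFn γ).tail ∘ ⇑w) Z⟫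
      = ⟪u, v⟫ - (2 * ⟪β, u⟫ / ⟪β, β⟫) * ⟪u, β⟫ := by
    simp only [Function.comp_apply, ← hu, ← hv]
    rw [show (⟪Z, w.symm (reflect β v)⟫ : ℝ) = ⟪w Z, reflect β v⟫ by
      rw [← w.inner_map_map Z (w.symm (reflect β v)), w.apply_symm_apply]]
    rw [← hu, inner_reflect, hβv]
  have key2 : ⟪Z, (⇑w1 ∘ ⇑w.symm ∘ compReflect (List.ofFn γ) ∘ ⇑w ∘ ⇑w2) Z⟫
      = ⟪u, v⟫ - (2 * ⟪γ 0, u⟫ / ⟪γ 0, γ 0⟫) * ⟪u, γ 0⟫ := by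
    simp only [Function.comp_apply, hw2, ← hu]
    have hw1' : w1.symm Z = Z := w1.symm_apply_eq.2 hw1.symm
    have step : (⟪Z, w1 (w.symm (compReflect (List.ofFn γ) u))⟫ : ℝ)
        = ⟪Z, w.symm (compReflect (List.ofFn γ) u)⟫ := by
      nth_rewrite 1 [← hw1]
      rw [w1.inner_map_map]
    rw [step]
    rw [show (⟪Z, w.symm (compReflect (List.ofFn γ) u)⟫ : ℝ)
        = ⟪w Z, compReflect (List.ofFn γ) u⟫ by
      rw [← w.inner_map_map, w.apply_symm_apply], ← hu]
    rw [hofn, compReflect_cons, ← htail, ← hv, inner_reflect, hγv]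
  have heq : ⟪Z, (⇑w.symm ∘ reflect β ∘ compReflect (List.ofFn γ).tail ∘ ⇑w) Z⟫
        - ⟪Z, (⇑w1 ∘ ⇑w.symm ∘ compReflect (List.ofFn γ) ∘ ⇑w ∘ ⇑w2) Z⟫
      = 2 * ⟪γ 0, u⟫ ^ 2 / ⟪γ 0, γ 0⟫ - 2 * ⟪β, u⟫ ^ 2 / ⟪β, β⟫ := by
    rw [key1, key2, real_inner_comm u β, real_inner_comm u (γ 0)]
    field_simp
    ring
  have hpos : (0:ℝ) < 2 * ⟪γ 0, u⟫ ^ 2 / ⟪γ 0, γ 0⟫ - 2 * ⟪β, u⟫ ^ 2 / ⟪β, β⟫ := by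
    rw [hββ]
    rw [div_sub_div _ _ (ne_of_gt hγγ) (by positivity : (2:ℝ) * ⟪γ 0, γ 0⟫ ≠ 0)]
    apply div_pos
    · nlinarith [mul_pos hγγ (pow_pos hγ1 2), mul_le_mul_of_nonneg_left
        (show (⟪β, u⟫:ℝ)^2 ≤ ⟪γ 0, u⟫^2 by nlinarith) hγγ.le]
    · positivity
  refine ⟨heq, hpos, ?_⟩
  intro hcontra
  rw [hcontra, sub_self] at heq
  linarith [heq, hpos]
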